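/- arXiv:1405.2203 — 2 statements merged into one kernel-verified Lean document; each statement's English description precedes it below -/
import Mathlib

section
/- Let G_ν be the n-dimensional heat kernel and ∂_i G_ν its i-th spatial derivative. For every μ ∈ (1/2, 1) there exists C' > 0 such that |∂_i G_ν(t, x)| ≤ C'/((νt)^μ |x|^{n+1-2μ}) for all t > 0, x ≠ 0; and for μ ∈ (1/2, 1) the bound (t^μ|x|^{n+1-2μ})^{-1} is locally integrable on (0,1) × B₁(0). -/
open Real MeasureTheory Set Metric

private lemma aux_exp_bound (a : ℝ) (ha : 0 < a) :
    ∃ M : ℝ, 0 < M ∧ ∀ u : ℝ, 0 ≤ u → u ^ a * Real.exp (-u) ≤ M := by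
  refine ⟨(Nat.factorial (Nat.ceil a) : ℝ), by exact_mod_cast Nat.factorial_pos _, fun u hu => ?_⟩
  have hfac : (1:ℝ) ≤ (Nat.factorial (Nat.ceil a) : ℝ) := by
    exact_mod_cast Nat.one_le_iff_ne_zero.2 (Nat.factorial_pos _).ne'
  rcases le_or_gt u 1 with h1 | h1
  · have h2 : u ^ a ≤ 1 := Real.rpow_le_one hu h1 ha.le
    have h3 : Real.exp (-u) ≤ 1 := Real.exp_le_one_iff.2 (by linarith)
    nlinarith [Real.exp_pos (-u), Real.rpow_nonneg hu a]
  · have h2 : u ^ a ≤ u ^ ((Nat.ceil a : ℕ) : ℝ) :=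
      Real.rpow_le_rpow_of_exponent_le h1.le (Nat.le_ceil a)
    rw [Real.rpow_natCast] at h2
    have h4 : u ^ (Nat.ceil a) ≤ (Nat.factorial (Nat.ceil a) : ℝ) * Real.exp u := by
      have h := Real.pow_div_factorial_le_exp (x := u) (by linarith) (Nat.ceil a)
      rw [div_le_iff₀ (by positivity)] at h
      linarith [h]
    have h5 : Real.exp u * Real.exp (-u) = 1 := by rw [← Real.exp_add]; simp
    calc u ^ a * Real.exp (-u) ≤ ((Nat.factorial (Nat.ceil a) : ℝ) * Real.exp u) * Real.exp (-u) :=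
          mul_le_mul_of_nonneg_right (h2.trans h4) (Real.exp_pos _).le
      _ = (Nat.factorial (Nat.ceil a) : ℝ) := by rw [mul_assoc, h5, mul_one]

private lemma core_eq (n : ℕ) (μ s r : ℝ) (hs : 0 < s) (hr : 0 < r) :
    r / (2*s) * ((4*π*s) ^ (-(n:ℝ)/2) * Real.exp (-r^2/(4*s))) * (s^μ * r^((n:ℝ)+1-2*μ))
      = (1/2) * (4*π) ^ (-(n:ℝ)/2) * 4 ^ ((n:ℝ)/2+1-μ) *
        ((r^2/(4*s)) ^ ((n:ℝ)/2+1-μ) * Real.exp (-(r^2/(4*s)))) := by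
  have hπ : (0:ℝ) < 4*π := by positivity
  set a : ℝ := (n:ℝ)/2+1-μ with hadef
  have h1 : (4*π*s) ^ (-(n:ℝ)/2) = (4*π)^(-(n:ℝ)/2) * s^(-(n:ℝ)/2) :=
    Real.mul_rpow hπ.le hs.le
  have h2 : (r^2/(4*s)) ^ a = r ^ (2*a) / (4^a * s^a) := by
    rw [Real.div_rpow (by positivity) (by positivity),
        Real.mul_rpow (by norm_num) hs.le, ← Real.rpow_natCast r 2, ← Real.rpow_mul hr.le]
    norm_num
  have h3 : r^((n:ℝ)+1-2*μ) * r = r ^ (2*a) := by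
    rw [show (2:ℝ)*a = ((n:ℝ)+1-2*μ)+1 by rw [hadef]; ring, Real.rpow_add hr, Real.rpow_one]
  have h5 : s^μ * s^(-(n:ℝ)/2) * s^a = s := by
    rw [← Real.rpow_add hs, ← Real.rpow_add hs,
      show μ + (-(n:ℝ)/2) + a = 1 by rw [hadef]; ring, Real.rpow_one]
  have hexp : -r^2/(4*s) = -(r^2/(4*s)) := by ring
  rw [hexp, h1, h2]
  have hZ : s^a ≠ 0 := by positivity
  have hF : (4:ℝ)^a ≠ 0 := by positivity
  field_simp
  rw [neg_div] at h5
  linear_combination (s^μ * s^(-((n:ℝ)/2)) * s^a) * h3 + r^(2*a) * h5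

private lemma aux_ball_int (n : ℕ) (b : ℝ) (hb0 : 0 < b) (hbn : b < n) :
    IntegrableOn (fun y : EuclideanSpace ℝ (Fin n) => ‖y‖ ^ (-b))
      (ball (0 : EuclideanSpace ℝ (Fin n)) 1) volume := by
  set E := EuclideanSpace ℝ (Fin n)
  have hmeas : Measurable fun y : E => ‖y‖ ^ (-b) := by fun_prop
  have hnn : ∀ y : E, 0 ≤ ‖y‖ ^ (-b) := fun y => rpow_nonneg (norm_nonneg _) _
  set μr := volume.restrict (ball (0:E) 1) with hμr
  constructor
  · exact hmeas.aestronglyMeasurable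
  · rw [hasFiniteIntegral_iff_ofReal (ae_of_all _ hnn)]
    rw [lintegral_eq_lintegral_meas_le _ (ae_of_all _ hnn) hmeas.aemeasurable]
    have hB : volume (ball (0:E) 1) < ⊤ := measure_ball_lt_top
    calc ∫⁻ t in Ioi (0:ℝ), μr {a : E | t ≤ ‖a‖ ^ (-b)}
        ≤ ∫⁻ t in Ioc (0:ℝ) 1 ∪ Ioi 1, μr {a : E | t ≤ ‖a‖ ^ (-b)} :=
          lintegral_mono_set Ioi_subset_Ioc_union_Ioi
      _ ≤ (∫⁻ t in Ioc (0:ℝ) 1, μr {a : E | t ≤ ‖a‖ ^ (-b)}) +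
            ∫⁻ t in Ioi (1:ℝ), μr {a : E | t ≤ ‖a‖ ^ (-b)} := lintegral_union_le _ _ _
      _ < ⊤ := by
          refine ENNReal.add_lt_top.2 ⟨?_, ?_⟩
          · calc (∫⁻ t in Ioc (0:ℝ) 1, μr {a : E | t ≤ ‖a‖ ^ (-b)})
                ≤ ∫⁻ _ in Ioc (0:ℝ) 1, volume (ball (0:E) 1) := by
                  refine lintegral_mono fun t => ?_
                  rw [show volume (ball (0:E) 1) = μr univ from (Measure.restrict_apply_univ _).symm]
                  exact measure_mono (subset_univ _)
              _ = volume (ball (0:E) 1) * volume (Ioc (0:ℝ) 1) := setLIntegral_const _ _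
              _ < ⊤ := by
                  rw [Real.volume_Ioc]
                  exact ENNReal.mul_lt_top hB (by norm_num)
          · have key : ∀ t ∈ Ioi (1:ℝ), μr {a : E | t ≤ ‖a‖ ^ (-b)} ≤
                ENNReal.ofReal (t ^ (-b⁻¹ * n)) * volume (ball (0:E) 1) := by
              intro t ht
              have ht1 : (1:ℝ) < t := ht
              have ht0 : (0:ℝ) < t := by linarith
              have hsub : {a : E | t ≤ ‖a‖ ^ (-b)} ∩ ball (0:E) 1 ⊆
                  closedBall (0:E) (t ^ (-b⁻¹)) := by
                rintro a ⟨ha, -⟩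
                simp only [mem_setOf_eq] at ha
                have hapos : 0 < ‖a‖ := by
                  rcases eq_or_lt_of_le (norm_nonneg a) with h | h
                  · exfalso
                    rw [← h, Real.zero_rpow (by simpa using hb0.ne' : -b ≠ 0)] at ha
                    · linarith
                  · exact h
                have h1 : ‖a‖ ^ b ≤ t⁻¹ := by
                  rw [Real.rpow_neg (norm_nonneg a)] at ha
                  have := (le_inv_comm₀ ht0 (Real.rpow_pos_of_pos hapos b)).1 ha
                  exact this
                have h2 : (‖a‖ ^ b) ^ b⁻¹ ≤ (t⁻¹) ^ b⁻¹ :=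
                  Real.rpow_le_rpow (by positivity) h1 (by positivity)
                rw [← Real.rpow_mul (norm_nonneg a), mul_inv_cancel₀ hb0.ne',
                  Real.rpow_one] at h2
                rw [mem_closedBall_zero_iff]
                calc ‖a‖ ≤ (t⁻¹) ^ b⁻¹ := h2
                  _ = t ^ (-b⁻¹) := by
                      rw [← Real.rpow_neg_one t, ← Real.rpow_mul ht0.le]; ring_nf
              have hR : (0:ℝ) ≤ t ^ (-b⁻¹) := Real.rpow_nonneg ht0.le _
              calc μr {a : E | t ≤ ‖a‖ ^ (-b)}
                  = volume ({a : E | t ≤ ‖a‖ ^ (-b)} ∩ ball (0:E) 1) :=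
                    Measure.restrict_apply' measurableSet_ball
                _ ≤ volume (closedBall (0:E) (t ^ (-b⁻¹))) := measure_mono hsub
                _ = ENNReal.ofReal ((t ^ (-b⁻¹)) ^ Module.finrank ℝ E) * volume (ball (0:E) 1) :=
                    Measure.addHaar_closedBall _ _ hR
                _ = ENNReal.ofReal (t ^ (-b⁻¹ * n)) * volume (ball (0:E) 1) := by
                    rw [← Real.rpow_natCast (t ^ (-b⁻¹)) (Module.finrank ℝ E), ← Real.rpow_mul ht0.le,
                      finrank_euclideanSpace, Fintype.card_fin]
            calc (∫⁻ t in Ioi (1:ℝ), μr {a : E | t ≤ ‖a‖ ^ (-b)})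
                ≤ ∫⁻ t in Ioi (1:ℝ), ENNReal.ofReal (t ^ (-b⁻¹ * n)) * volume (ball (0:E) 1) :=
                  setLIntegral_mono (by fun_prop) key
              _ = (∫⁻ t in Ioi (1:ℝ), ENNReal.ofReal (t ^ (-b⁻¹ * n))) * volume (ball (0:E) 1) :=
                  lintegral_mul_const' _ _ hB.ne
              _ < ⊤ := by
                  refine ENNReal.mul_lt_top ?_ hB
                  have hint : IntegrableOn (fun t : ℝ => t ^ (-b⁻¹ * n)) (Ioi 1) volume := by
                    refine integrableOn_Ioi_rpow_of_lt ?_ one_pos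
                    have h1 : (1:ℝ) < n / b := (one_lt_div hb0).2 hbn
                    have : -b⁻¹ * n = -(n / b) := by field_simp
                    rw [this]; linarith
                  exact hint.lintegral_lt_top

theorem heat_kernel_derivative_bound (n : ℕ) (hn : 1 ≤ n) (ν : ℝ) (hν : 0 < ν)
    (i : Fin n) (μ : ℝ) (hμ : μ ∈ Set.Ioo (1/2 : ℝ) 1) :
    (∃ C' : ℝ, 0 < C' ∧
      ∀ t : ℝ, 0 < t → ∀ x : EuclideanSpace ℝ (Fin n), x ≠ 0 →
        |(-(x i) / (2*ν*t)) * ((4*π*ν*t) ^ (-(n:ℝ)/2) * Real.exp (-‖x‖^2 / (4*ν*t)))|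
          ≤ C' / ((ν*t)^μ * ‖x‖^((n:ℝ) + 1 - 2*μ))) ∧
    MeasureTheory.IntegrableOn
      (fun p : ℝ × EuclideanSpace ℝ (Fin n) => (p.1^μ * ‖p.2‖^((n:ℝ) + 1 - 2*μ))⁻¹)
      (Set.Ioo (0:ℝ) 1 ×ˢ Metric.ball (0 : EuclideanSpace ℝ (Fin n)) 1) := by
  obtain ⟨hμ1, hμ2⟩ := hμ
  constructor
  · -- Part 1
    set a : ℝ := (n:ℝ)/2+1-μ with hadef
    have ha : 0 < a := by
      have : (0:ℝ) ≤ (n:ℝ)/2 := by positivity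
      rw [hadef]; linarith
    obtain ⟨M, hM, hMb⟩ := aux_exp_bound a ha
    refine ⟨(1/2) * (4*π) ^ (-(n:ℝ)/2) * 4 ^ a * M, by positivity, fun t ht x hx => ?_⟩
    have hs : 0 < ν * t := by positivity
    have hr : 0 < ‖x‖ := norm_pos_iff.2 hx
    have hxi : |x i| ≤ ‖x‖ := by
      rw [EuclideanSpace.norm_eq]
      calc |x i| = √(‖x i‖^2) := by rw [Real.sqrt_sq (norm_nonneg _), Real.norm_eq_abs]
        _ ≤ √(∑ j, ‖x j‖^2) := Real.sqrt_le_sqrt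
            (Finset.single_le_sum (f := fun j => ‖x j‖^2) (fun j _ => sq_nonneg _) (Finset.mem_univ i))
    rw [show (2:ℝ)*ν*t = 2*(ν*t) by ring, show (4:ℝ)*π*ν*t = 4*π*(ν*t) by ring,
      show (4:ℝ)*ν*t = 4*(ν*t) by ring, abs_mul, abs_div, abs_neg,
      abs_of_pos (by positivity : (0:ℝ) < 2*(ν*t)),
      abs_of_pos (by positivity : (0:ℝ) < (4*π*(ν*t)) ^ (-(n:ℝ)/2) * Real.exp (-‖x‖^2 / (4*(ν*t))))]
    calc |x i| / (2*(ν*t)) * ((4*π*(ν*t)) ^ (-(n:ℝ)/2) * Real.exp (-‖x‖^2 / (4*(ν*t))))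
        ≤ ‖x‖ / (2*(ν*t)) * ((4*π*(ν*t)) ^ (-(n:ℝ)/2) * Real.exp (-‖x‖^2 / (4*(ν*t)))) := by
          gcongr
      _ ≤ (1/2) * (4*π) ^ (-(n:ℝ)/2) * 4 ^ a * M / ((ν*t)^μ * ‖x‖^((n:ℝ) + 1 - 2*μ)) := by
          rw [le_div_iff₀ (by positivity), core_eq n μ (ν*t) ‖x‖ hs hr]
          have hu : (0:ℝ) ≤ ‖x‖^2 / (4*(ν*t)) := by positivity
          have := hMb _ hu
          have hc : (0:ℝ) ≤ (1/2) * (4*π) ^ (-(n:ℝ)/2) * 4 ^ a := by positivity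
          calc (1/2) * (4*π) ^ (-(n:ℝ)/2) * 4 ^ ((n:ℝ)/2+1-μ) *
                ((‖x‖^2/(4*(ν*t))) ^ ((n:ℝ)/2+1-μ) * Real.exp (-(‖x‖^2/(4*(ν*t)))))
              ≤ (1/2) * (4*π) ^ (-(n:ℝ)/2) * 4 ^ ((n:ℝ)/2+1-μ) * M := by
                exact mul_le_mul_of_nonneg_left this hc
            _ = (1/2) * (4*π) ^ (-(n:ℝ)/2) * 4 ^ a * M := by rw [hadef]
  · -- Part 2
    set b : ℝ := (n:ℝ) + 1 - 2*μ with hbdef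
    have hn1 : (1:ℝ) ≤ n := by exact_mod_cast hn
    have hb0 : 0 < b := by rw [hbdef]; linarith
    have hbn : b < n := by rw [hbdef]; linarith
    have h1 : IntegrableOn (fun t : ℝ => (t^μ)⁻¹) (Ioo (0:ℝ) 1) volume := by
      have h := (intervalIntegral.integrableOn_Ioo_rpow_iff (zero_lt_one)).2 (show (-1:ℝ) < -μ by linarith)
      exact h.congr_fun (fun x hx => by rw [← Real.rpow_neg hx.1.le]) measurableSet_Ioo
    have h2 : IntegrableOn (fun y : EuclideanSpace ℝ (Fin n) => (‖y‖^b)⁻¹)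
        (ball (0 : EuclideanSpace ℝ (Fin n)) 1) volume := by
      have h := aux_ball_int n b hb0 hbn
      exact h.congr_fun (fun y _ => by rw [← Real.rpow_neg (norm_nonneg _)]) measurableSet_ball
    have key : Integrable (fun p : ℝ × EuclideanSpace ℝ (Fin n) => (p.1^μ)⁻¹ * (‖p.2‖^b)⁻¹)
        ((volume.restrict (Ioo (0:ℝ) 1)).prod
          (volume.restrict (ball (0 : EuclideanSpace ℝ (Fin n)) 1))) :=
      Integrable.mul_prod h1 h2
    rw [IntegrableOn, Measure.volume_eq_prod, ← Measure.prod_restrict]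
    simpa only [mul_inv] using key
end

section
/- Let F : ℝⁿ → ℝ be Lipschitz with constant L and bounded, and let G_ν be the heat kernel on ℝⁿ. Then for each i and each t > 0, |∫_{ℝⁿ} F(x - y)·∂_iG_ν(t, y) dy| ≤ L·∫_{y_i ≥ 0} (y_i/(νt))·y_i·G_ν(t, y) dy, and consequently the spatial convolution |F ∗ ∂_iG_ν(t, ·)| is bounded by L times a second-moment constant of the Gaussian, uniformly in x. (Key step: ∫F(x-y)∂_iG_ν(t,y)dy = ∫_{y_i≥0}(F(x-y) - F(x-y^{-i}))·(-y_i/(2νt))G_ν(t,y)dy where y^{-i} flips the sign of the i-th coordinate, using oddness of ∂_iG_ν in y_i.) -/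
open Real MeasureTheory

lemma gauss_integrable {E : Type*} [NormedAddCommGroup E] [InnerProductSpace ℝ E]
    [FiniteDimensional ℝ E] [MeasurableSpace E] [BorelSpace E] {b : ℝ} (hb : 0 < b) :
    Integrable (fun v : E => Real.exp (-(b * ‖v‖ ^ 2))) := by
  have h := GaussianFourier.integrable_cexp_neg_mul_sq_norm_add (V := E) (b := (b : ℂ)) (by simpa using hb) 0 0
  refine h.norm.congr (Filter.Eventually.of_forall fun v => ?_)
  simp [Complex.norm_exp, ← Complex.ofReal_pow]

lemma gauss_sq_integrable {E : Type*} [NormedAddCommGroup E] [InnerProductSpace ℝ E]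
    [FiniteDimensional ℝ E] [MeasurableSpace E] [BorelSpace E] {b : ℝ} (hb : 0 < b) :
    Integrable (fun v : E => ‖v‖ ^ 2 * Real.exp (-(b * ‖v‖ ^ 2))) := by
  have h1 := (gauss_integrable (E := E) (half_pos hb)).const_mul (2 / b)
  refine h1.mono' ?_ (Filter.Eventually.of_forall fun v => ?_)
  · exact ((continuous_norm.pow 2).mul
      (Real.continuous_exp.comp ((continuous_const.mul (continuous_norm.pow 2)).neg))).aestronglyMeasurable
  · set s : ℝ := ‖v‖ ^ 2 with hs
    have hs0 : 0 ≤ s := by positivity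
    have h2 : b / 2 * s ≤ Real.exp (b / 2 * s) := by
      have := Real.add_one_le_exp (b / 2 * s); linarith
    have h2' : s ≤ 2 / b * Real.exp (b / 2 * s) := by
      calc s = 2 / b * (b / 2 * s) := by field_simp
        _ ≤ 2 / b * Real.exp (b / 2 * s) :=
          mul_le_mul_of_nonneg_left h2 (by positivity)
    have h3 : s * Real.exp (-(b * s)) ≤ 2 / b * Real.exp (b / 2 * s) * Real.exp (-(b * s)) :=
      mul_le_mul_of_nonneg_right h2' (Real.exp_pos _).le
    have h4 : 2 / b * Real.exp (b / 2 * s) * Real.exp (-(b * s))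
        = 2 / b * Real.exp (-(b / 2 * s)) := by
      rw [mul_assoc, ← Real.exp_add]
      congr 2
      ring
    rw [Real.norm_eq_abs, abs_of_nonneg (by positivity)]
    calc s * Real.exp (-(b * s)) ≤ 2 / b * Real.exp (-(b / 2 * s)) := h4 ▸ h3
      _ = 2 / b * Real.exp (-(b / 2 * ‖v‖ ^ 2)) := by rw [hs]

theorem lipschitz_convolution_derivative_bound (n : ℕ) (hn : 1 ≤ n) (ν t : ℝ)
    (hν : 0 < ν) (ht : 0 < t) (i : Fin n) (F : EuclideanSpace ℝ (Fin n) → ℝ) (L : ℝ)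
    (hFb : ∃ M : ℝ, ∀ x, |F x| ≤ M)
    (hFL : ∀ u v : EuclideanSpace ℝ (Fin n), |F u - F v| ≤ L * ‖u - v‖) :
    ∀ x : EuclideanSpace ℝ (Fin n),
      |∫ y : EuclideanSpace ℝ (Fin n),
          F (x - y) * ((-(y i) / (2*ν*t)) *
            ((4*π*ν*t) ^ (-(n:ℝ)/2) * Real.exp (-‖y‖^2 / (4*ν*t))))|
        ≤ L * ∫ y in {y : EuclideanSpace ℝ (Fin n) | 0 ≤ y i},
            (y i / (ν*t)) * y i *
              ((4*π*ν*t) ^ (-(n:ℝ)/2) * Real.exp (-‖y‖^2 / (4*ν*t))) := by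
  intro x
  obtain ⟨M, hM⟩ := hFb
  have hM0 : 0 ≤ M := le_trans (abs_nonneg _) (hM 0)
  set c : ℝ := (4*π*ν*t) ^ (-(n:ℝ)/2) with hc
  have hc0 : 0 < c := Real.rpow_pos_of_pos (by positivity) _
  set b : ℝ := (4*ν*t)⁻¹ with hb
  have hb0 : 0 < b := by positivity
  have hE : ∀ y : EuclideanSpace ℝ (Fin n), -‖y‖ ^ 2 / (4*ν*t) = -(b * ‖y‖ ^ 2) := by
    intro y; rw [hb]; ring
  simp only [hE]
  -- continuity of coordinate projections
  have hconti : Continuous fun y : EuclideanSpace ℝ (Fin n) => y i :=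
    (EuclideanSpace.proj (𝕜 := ℝ) i).continuous
  -- F is continuous
  have hL0 : 0 ≤ L := by
    have h1 := hFL (EuclideanSpace.single i (1 : ℝ)) 0
    have h2 : ‖EuclideanSpace.single i (1 : ℝ) - 0‖ = 1 := by
      simp [EuclideanSpace.norm_single]
    rw [h2, mul_one] at h1
    exact le_trans (abs_nonneg _) h1
  have hFc : Continuous F := by
    refine (LipschitzWith.of_dist_le_mul (K := ⟨L, hL0⟩) fun u v => ?_).continuous
    rw [Real.dist_eq, dist_eq_norm]
    exact hFL u v
  set g : EuclideanSpace ℝ (Fin n) → ℝ := fun y =>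
    F (x - y) * (-(y i) / (2*ν*t) * (c * Real.exp (-(b * ‖y‖ ^ 2)))) with hg
  set φ : EuclideanSpace ℝ (Fin n) → ℝ := fun y =>
    y i / (ν*t) * y i * (c * Real.exp (-(b * ‖y‖ ^ 2))) with hφ
  have hgc : Continuous g := by
    apply Continuous.mul
    · exact hFc.comp (continuous_const.sub continuous_id)
    · exact ((hconti.neg).div_const _).mul (continuous_const.mul
        (Real.continuous_exp.comp ((continuous_const.mul (continuous_norm.pow 2)).neg)))
  have hcoordsq : ∀ y : EuclideanSpace ℝ (Fin n), (y i) ^ 2 ≤ ‖y‖ ^ 2 := by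
    intro y
    rw [EuclideanSpace.norm_eq, Real.sq_sqrt (by positivity)]
    calc (y i) ^ 2 = ‖y i‖ ^ 2 := by rw [Real.norm_eq_abs, sq_abs]
      _ ≤ ∑ j, ‖y j‖ ^ 2 := Finset.single_le_sum (f := fun j => ‖y j‖ ^ 2)
          (fun j _ => by positivity) (Finset.mem_univ i)
  have hcoord : ∀ y : EuclideanSpace ℝ (Fin n), |y i| ≤ ‖y‖ := by
    intro y
    have := hcoordsq y
    nlinarith [abs_nonneg (y i), norm_nonneg y, sq_abs (y i)]
  -- integrability of g
  have hint : Integrable g := by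
    refine (((gauss_integrable hb0).add (gauss_sq_integrable hb0)).const_mul
      (M * c / (2*ν*t))).mono' hgc.aestronglyMeasurable (Filter.Eventually.of_forall fun y => ?_)
    set e : ℝ := Real.exp (-(b * ‖y‖ ^ 2)) with he
    have he0 : 0 < e := Real.exp_pos _
    have h1 : ‖g y‖ = |F (x - y)| * (|y i| / (2*ν*t) * (c * e)) := by
      rw [Real.norm_eq_abs, hg, abs_mul, abs_mul, abs_div, abs_neg,
        abs_of_pos (show (0:ℝ) < 2*ν*t by positivity), abs_of_pos (by positivity : 0 < c * e)]
    rw [h1]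
    have h2 : |y i| ≤ 1 + ‖y‖ ^ 2 := by nlinarith [hcoord y, norm_nonneg y]
    calc |F (x - y)| * (|y i| / (2*ν*t) * (c * e))
        ≤ M * ((1 + ‖y‖ ^ 2) / (2*ν*t) * (c * e)) := by
          gcongr
          exact hM _
      _ = M * c / (2*ν*t) * (e + ‖y‖ ^ 2 * e) := by field_simp
  -- integrability of the bound
  have hφint : Integrable (fun y : EuclideanSpace ℝ (Fin n) => L * φ y) := by
    refine ((gauss_sq_integrable hb0).const_mul (L * c / (ν*t))).mono'
      ?_ (Filter.Eventually.of_forall fun y => ?_)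
    · exact (continuous_const.mul (((hconti.div_const _).mul hconti).mul (continuous_const.mul
        (Real.continuous_exp.comp ((continuous_const.mul (continuous_norm.pow 2)).neg))))).aestronglyMeasurable
    · set e : ℝ := Real.exp (-(b * ‖y‖ ^ 2)) with he
      have he0 : 0 < e := Real.exp_pos _
      have h1 : ‖L * φ y‖ = L * ((y i) ^ 2 / (ν*t) * (c * e)) := by
        rw [Real.norm_eq_abs, hφ, abs_mul, abs_of_nonneg hL0, abs_mul, abs_mul, abs_div,
          abs_of_pos (show (0:ℝ) < ν*t by positivity), abs_of_pos (by positivity : 0 < c * e),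
          ← sq_abs (y i)]
        ring
      rw [h1, show L * ((y i) ^ 2 / (ν*t) * (c * e)) = L * c / (ν*t) * e * (y i) ^ 2 by ring,
        show L * c / (ν*t) * (‖y‖ ^ 2 * e) = L * c / (ν*t) * e * ‖y‖ ^ 2 by ring]
      exact mul_le_mul_of_nonneg_left (hcoordsq y)
        (mul_nonneg (div_nonneg (mul_nonneg hL0 hc0.le) (by positivity)) he0.le)
  -- the reflection
  set R : EuclideanSpace ℝ (Fin n) ≃ₗᵢ[ℝ] EuclideanSpace ℝ (Fin n) :=
    LinearIsometryEquiv.piLpCongrRight 2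
      (fun j => if j = i then LinearIsometryEquiv.neg ℝ else LinearIsometryEquiv.refl ℝ ℝ) with hR
  have hRapp : ∀ (y : EuclideanSpace ℝ (Fin n)) (j : Fin n),
      R y j = if j = i then -(y j) else y j := by
    intro y j
    rw [hR]
    simp only [LinearIsometryEquiv.piLpCongrRight_apply, WithLp.ofLp_toLp]
    split_ifs with h
    · subst h; simp
    · simp
  have hRi : ∀ y : EuclideanSpace ℝ (Fin n), R y i = -(y i) := fun y => by
    rw [hRapp]; simp
  have hRmp := R.measurePreserving
  have hRemb := R.toHomeomorph.measurableEmbedding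
  set S : Set (EuclideanSpace ℝ (Fin n)) := {y | 0 ≤ y i} with hS
  have hSmeas : MeasurableSet S := measurableSet_le measurable_const hconti.measurable
  -- null hyperplane
  have hnull : volume {y : EuclideanSpace ℝ (Fin n) | y i = 0} = 0 := by
    have h1 : {y : EuclideanSpace ℝ (Fin n) | y i = 0}
        = (LinearMap.ker (EuclideanSpace.projₗ (𝕜 := ℝ) (ι := Fin n) i) : Set (EuclideanSpace ℝ (Fin n))) := by
      ext y; simp [LinearMap.mem_ker]
    rw [h1]
    apply Measure.addHaar_submodule
    intro htop
    have hmem : EuclideanSpace.single i (1 : ℝ) ∈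
        LinearMap.ker (EuclideanSpace.projₗ (𝕜 := ℝ) (ι := Fin n) i) := htop ▸ Submodule.mem_top
    simp [LinearMap.mem_ker] at hmem
  -- split the integral
  have hsplit : ∫ y, g y = (∫ y in S, g y) + ∫ y in Sᶜ, g y := (integral_add_compl hSmeas hint).symm
  have hpre : R ⁻¹' Sᶜ = {y : EuclideanSpace ℝ (Fin n) | 0 < y i} := by
    ext y
    simp only [Set.mem_preimage, Set.mem_compl_iff, hS, Set.mem_setOf_eq, hRi, not_le]
    constructor <;> intro h <;> linarith
  have hrefl : ∫ y in Sᶜ, g y = ∫ y in S, g (R y) := by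
    rw [← hRmp.setIntegral_preimage_emb hRemb g Sᶜ, hpre]
    apply setIntegral_congr_set
    rw [Filter.eventuallyEq_set]
    have : {y : EuclideanSpace ℝ (Fin n) | ¬(0 < y i ↔ 0 ≤ y i)}
        ⊆ {y : EuclideanSpace ℝ (Fin n) | y i = 0} := by
      intro y hy
      simp only [Set.mem_setOf_eq] at hy ⊢
      by_contra h
      rcases lt_or_gt_of_ne h with h' | h'
      · exact hy ⟨fun h2 => le_of_lt h2, fun h2 => absurd h2 (not_le.mpr h')⟩
      · exact hy ⟨fun h2 => le_of_lt h2, fun _ => h'⟩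
    exact measure_mono_null (by intro y hy; exact this hy) hnull
  have hcompint : Integrable (fun y => g (R y)) :=
    (hRmp.integrable_comp_emb hRemb).mpr hint
  have hcombine : ∫ y, g y = ∫ y in S, (g y + g (R y)) := by
    rw [hsplit, hrefl, ← integral_add hint.integrableOn hcompint.integrableOn]
  -- the pointwise bound on S
  have hbound : ∀ y ∈ S, ‖g y + g (R y)‖ ≤ L * φ y := by
    intro y hy
    have hy0 : 0 ≤ y i := hy
    set e : ℝ := Real.exp (-(b * ‖y‖ ^ 2)) with he
    have he0 : 0 < e := Real.exp_pos _
    have hnormR : ‖R y‖ = ‖y‖ := R.norm_map y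
    have hgR : g (R y) = F (x - R y) * (y i / (2*ν*t) * (c * e)) := by
      simp only [hg, hRi y, hnormR, neg_neg, he]
    have hsum : g y + g (R y) = (F (x - y) - F (x - R y)) * (-(y i) / (2*ν*t) * (c * e)) := by
      rw [hgR]; simp only [hg, he]; ring
    have hdiff : ‖x - y - (x - R y)‖ = 2 * y i := by
      have h1 : x - y - (x - R y) = R y - y := by abel
      have h2 : R y - y = EuclideanSpace.single i (-(2 * y i)) := by
        ext j
        have h3 : (R y - y) j = R y j - y j := rfl
        rw [h3, hRapp, EuclideanSpace.single_apply]
        split_ifs with h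
        · subst h; ring
        · ring
      rw [h1, h2, EuclideanSpace.norm_single, Real.norm_eq_abs, abs_neg,
        abs_of_nonneg (by linarith)]
    have hFdiff : |F (x - y) - F (x - R y)| ≤ L * (2 * y i) := by
      have := hFL (x - y) (x - R y)
      rwa [hdiff] at this
    have habs : ‖g y + g (R y)‖ = |F (x - y) - F (x - R y)| * (y i / (2*ν*t) * (c * e)) := by
      rw [hsum, Real.norm_eq_abs, abs_mul, abs_mul, abs_div, abs_neg, abs_of_nonneg hy0,
        abs_of_pos (show (0:ℝ) < 2*ν*t by positivity), abs_of_pos (by positivity : 0 < c * e)]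
    rw [habs]
    calc |F (x - y) - F (x - R y)| * (y i / (2*ν*t) * (c * e))
        ≤ L * (2 * y i) * (y i / (2*ν*t) * (c * e)) :=
          mul_le_mul_of_nonneg_right hFdiff (by positivity)
      _ = L * φ y := by rw [hφ]; field_simp; ring
  -- conclude
  rw [hcombine, ← Real.norm_eq_abs]
  calc ‖∫ y in S, (g y + g (R y))‖ ≤ ∫ y in S, L * φ y := by
        refine norm_integral_le_of_norm_le hφint.integrableOn ?_
        filter_upwards [ae_restrict_mem hSmeas] with y hy
        exact hbound y hy
    _ = L * ∫ y in S, φ y := integral_const_mul _ _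
end
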